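/- arXiv:0712.0987 — 3 statements merged into one kernel-verified Lean document; each statement's English description precedes it below -/
import Mathlib

section
/- Fix $\alpha \in (1,2]$, $c_+ > 0$, $x \geq 0$, $\lambda > 0$. Set $c_t = [c_+(\alpha-1)t]^{1/(\alpha-1)}$, $\psi(\mu) = c_+\mu^{\alpha}$, and $u_t(\mu) = [c_+(\alpha-1)t + \mu^{-(\alpha-1)}]^{-1/(\alpha-1)}$. Then $\lim_{t\to\infty} e^{-x u_t(\lambda/c_t)} \frac{\psi(u_t(\lambda/c_t))}{\psi(\lambda/c_t)} = \frac{1}{[\lambda^{\alpha-1} + 1]^{\alpha/(\alpha-1)}}$. -/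
open Real Filter

/-- CBI quasi-stationary-type limit:
`e^{-x u_t(λ/c_t)} ψ(u_t(λ/c_t))/ψ(λ/c_t) → [λ^{α-1}+1]^{-α/(α-1)}` as `t → ∞`,
with `c_t = [c₊(α-1)t]^{1/(α-1)}`, `ψ(μ) = c₊μ^α` and
`u_t(μ) = [c₊(α-1)t + μ^{-(α-1)}]^{-1/(α-1)}`. -/
theorem stmt_6 (α c x lam : ℝ) (hα : α ∈ Set.Ioc (1:ℝ) 2) (hc : 0 < c)
    (hx : 0 ≤ x) (hlam : 0 < lam) :
    Tendsto (fun t : ℝ =>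
        let ct := (c * (α - 1) * t) ^ ((α - 1)⁻¹)
        let u := (c * (α - 1) * t + (lam / ct) ^ (-(α - 1))) ^ (-(α - 1)⁻¹)
        Real.exp (-(x * u)) * (c * u ^ α) / (c * (lam / ct) ^ α))
      atTop (nhds (1 / (lam ^ (α - 1) + 1) ^ (α / (α - 1)))) := by
  obtain ⟨hα1, hα2⟩ := hα
  have hβ : (0:ℝ) < α - 1 := by linarith
  set L : ℝ := lam ^ (-(α - 1)) with hLdef
  have hL : 0 < L := rpow_pos_of_pos hlam _
  set K : ℝ := 1 / (lam ^ (α - 1) + 1) ^ (α / (α - 1)) with hKdef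
  set v : ℝ → ℝ := fun t => (c * (α - 1) * t * (1 + L)) ^ (-(α - 1)⁻¹) with hvdef
  set γ : ℝ := (α - 1)⁻¹ * α with hγdef
  -- eventual equality
  have hcongr : (fun t : ℝ =>
        let ct := (c * (α - 1) * t) ^ ((α - 1)⁻¹)
        let u := (c * (α - 1) * t + (lam / ct) ^ (-(α - 1))) ^ (-(α - 1)⁻¹)
        Real.exp (-(x * u)) * (c * u ^ α) / (c * (lam / ct) ^ α))
      =ᶠ[atTop] (fun t => Real.exp (-(x * v t)) * K) := by
    filter_upwards [eventually_gt_atTop (0:ℝ)] with t ht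
    dsimp only
    set s : ℝ := c * (α - 1) * t with hsdef
    have hs : 0 < s := by positivity
    set ct : ℝ := s ^ ((α - 1)⁻¹) with hctdef
    have hct : 0 < ct := rpow_pos_of_pos hs _
    have h1 : (lam / ct) ^ (-(α - 1)) = L * s := by
      rw [div_rpow hlam.le hct.le, hctdef, ← Real.rpow_mul hs.le,
        show (α - 1)⁻¹ * (-(α - 1)) = -1 by field_simp, Real.rpow_neg_one,
        div_eq_mul_inv, inv_inv]
    have h2 : s + (lam / ct) ^ (-(α - 1)) = s * (1 + L) := by rw [h1]; ring
    rw [h2]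
    have hsL : (0:ℝ) < s * (1 + L) := by positivity
    -- now u = v t
    have hv : (s * (1 + L)) ^ (-(α - 1)⁻¹) = v t := rfl
    -- compute the ratio
    have hu_pow : ((s * (1 + L)) ^ (-(α - 1)⁻¹)) ^ α
        = s ^ (-γ) * (1 + L) ^ (-γ) := by
      rw [← Real.rpow_mul hsL.le, show -(α - 1)⁻¹ * α = -γ by rw [hγdef]; ring,
        Real.mul_rpow hs.le (by positivity)]
    have hct_pow : (lam / ct) ^ α = lam ^ α / s ^ γ := by
      rw [div_rpow hlam.le hct.le, hctdef, ← Real.rpow_mul hs.le, hγdef]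
    have hratio : (c * ((s * (1 + L)) ^ (-(α - 1)⁻¹)) ^ α) / (c * (lam / ct) ^ α)
        = (1 + L) ^ (-γ) / lam ^ α := by
      rw [hu_pow, hct_pow, Real.rpow_neg hs.le γ]
      have h3 : s ^ γ ≠ 0 := ne_of_gt (rpow_pos_of_pos hs _)
      have h4 : lam ^ α ≠ 0 := ne_of_gt (rpow_pos_of_pos hlam _)
      field_simp
    have hfinal : (1 + L) ^ (-γ) / lam ^ α = K := by
      have h5 : 1 + L = (lam ^ (α - 1) + 1) * lam ^ (-(α - 1)) := by
        rw [add_mul, ← Real.rpow_add hlam, add_neg_cancel, Real.rpow_zero, one_mul,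
          hLdef]
      rw [h5, Real.mul_rpow (by positivity) (by positivity),
        ← Real.rpow_mul hlam.le,
        show -(α - 1) * -γ = α by rw [hγdef]; field_simp,
        mul_div_assoc, div_self (ne_of_gt (rpow_pos_of_pos hlam _)), mul_one,
        Real.rpow_neg (by positivity), show γ = α / (α - 1) by rw [hγdef]; ring,
        hKdef, one_div]
    rw [mul_div_assoc, hratio, hfinal]
  refine Tendsto.congr' hcongr.symm ?_
  have hv0 : Tendsto v atTop (nhds 0) := by
    have h := tendsto_rpow_neg_atTop (show (0:ℝ) < (α - 1)⁻¹ by positivity)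
    have hlin : Tendsto (fun t : ℝ => c * (α - 1) * t * (1 + L)) atTop atTop :=
      (tendsto_id.const_mul_atTop (by positivity : (0:ℝ) < c * (α - 1))).atTop_mul_const
        (by positivity)
    exact h.comp hlin
  have h6 : Tendsto (fun t => Real.exp (-(x * v t))) atTop (nhds 1) := by
    have h7 : Tendsto (fun t => -(x * v t)) atTop (nhds 0) := by
      simpa using (hv0.const_mul x).neg
    simpa [Function.comp_def] using (Real.continuous_exp.tendsto 0).comp h7
  simpa using h6.mul_const K
end

section
/- Let $\alpha > 1$ and let $\eta: [0,\infty) \to \mathbb{R}$ be a càdlàg function with $\eta_0 = 0$. Define $I_t(\beta) = \int_0^t e^{\beta \eta_s} ds$ for $\beta > 0$, $\zeta(t) = \inf\{s \geq 0 : I_s(\alpha) > t\}$, and for $x > 0$ let $X_t = x\exp\{\eta_{\zeta(t x^{-\alpha})}\}$ for $0 \leq t < x^{\alpha}I_{\infty}(\alpha)$. Let $A_t = \int_0^t X_s^{-1} ds$. Then $A_{x^{\alpha}I_t(\alpha)} = x^{\alpha-1} I_t(\alpha-1)$ for all $t \geq 0$ with $x^\alpha I_t(\alpha) < x^\alpha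 I_\infty(\alpha)$. -/
open Real
open Set Filter MeasureTheory intervalIntegral

lemma aux_cw (η : ℝ → ℝ)
    (hηright : ∀ s : ℝ, 0 ≤ s → ContinuousWithinAt η (Set.Ici s) s) (s : ℝ) :
    ContinuousWithinAt (fun u => η (max u 0)) (Set.Ici s) s := by
  refine ContinuousWithinAt.comp (f := fun u : ℝ => max u 0) (g := η)
    (hηright (max s 0) (le_max_right _ _))
    ((continuous_id.max continuous_const).continuousWithinAt) ?_
  intro u hu
  exact Set.mem_Ici.mpr (max_le_max (Set.mem_Ici.mp hu) le_rfl)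

lemma aux_meas (η : ℝ → ℝ)
    (hηright : ∀ s : ℝ, 0 ≤ s → ContinuousWithinAt η (Set.Ici s) s) :
    Measurable (fun s => η (max s 0)) := by
  set η' : ℝ → ℝ := fun s => η (max s 0) with hη'
  have hmeasn : ∀ n : ℕ, Measurable (fun s : ℝ => η' ((⌈s * 2 ^ n⌉ : ℝ) / 2 ^ n)) := by
    intro n
    have h1 : Measurable (fun k : ℤ => η' ((k : ℝ) / 2 ^ n)) := measurable_from_top
    exact h1.comp (Int.measurable_ceil.comp (measurable_id.mul_const _))
  apply measurable_of_tendsto_metrizable hmeasn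
  rw [tendsto_pi_nhds]
  intro s
  have hpow : ∀ n : ℕ, (0:ℝ) < 2 ^ n := fun n => by positivity
  have hge : ∀ n : ℕ, s ≤ (⌈s * 2 ^ n⌉ : ℝ) / 2 ^ n := by
    intro n
    rw [le_div_iff₀ (hpow n)]
    exact Int.le_ceil _
  have hle : ∀ n : ℕ, (⌈s * 2 ^ n⌉ : ℝ) / 2 ^ n ≤ s + (2 ^ n)⁻¹ := by
    intro n
    rw [div_le_iff₀ (hpow n)]
    have := (Int.ceil_lt_add_one (s * 2 ^ n)).le
    calc (⌈s * 2 ^ n⌉ : ℝ) ≤ s * 2 ^ n + 1 := this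
      _ = (s + (2 ^ n)⁻¹) * 2 ^ n := by field_simp
  have htend : Filter.Tendsto (fun n : ℕ => (⌈s * 2 ^ n⌉ : ℝ) / 2 ^ n) Filter.atTop
      (nhdsWithin s (Set.Ici s)) := by
    rw [tendsto_nhdsWithin_iff]
    constructor
    · have h2 : Filter.Tendsto (fun n : ℕ => s + ((2:ℝ) ^ n)⁻¹) Filter.atTop (nhds (s + 0)) := by
        exact tendsto_const_nhds.add
          (tendsto_inv_atTop_zero.comp (tendsto_pow_atTop_atTop_of_one_lt one_lt_two))
      rw [add_zero] at h2
      exact tendsto_of_tendsto_of_tendsto_of_le_of_le tendsto_const_nhds h2 hge hle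
    · exact Filter.Eventually.of_forall (fun n => hge n)
  exact (aux_cw η hηright s).tendsto.comp htend


lemma aux_bdd (η : ℝ → ℝ)
    (hηright : ∀ s : ℝ, 0 ≤ s → ContinuousWithinAt η (Set.Ici s) s)
    (hηleft : ∀ s : ℝ, 0 < s → ∃ l : ℝ, Filter.Tendsto η (nhdsWithin s (Set.Iio s)) (nhds l))
    (t : ℝ) : ∃ C : ℝ, ∀ s ∈ Set.Icc (0:ℝ) t, |η s| ≤ C := by
  rcases le_or_gt t 0 with ht | ht
  · refine ⟨|η 0|, fun s hs => ?_⟩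
    have : s = 0 := le_antisymm (hs.2.trans ht) hs.1
    rw [this]
  set B : Set ℝ := {b | b ∈ Set.Icc (0:ℝ) t ∧ ∃ C : ℝ, ∀ s ∈ Set.Icc (0:ℝ) b, |η s| ≤ C} with hB
  have h0 : (0:ℝ) ∈ B := by
    refine ⟨⟨le_rfl, ht.le⟩, |η 0|, fun s hs => ?_⟩
    have : s = 0 := le_antisymm hs.2 hs.1
    rw [this]
  have hbdd : BddAbove B := ⟨t, fun b hb => hb.1.2⟩
  have hne : B.Nonempty := ⟨0, h0⟩
  set b := sSup B with hbdef
  have hb0 : 0 ≤ b := le_csSup hbdd h0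
  have hbt : b ≤ t := csSup_le hne (fun y hy => hy.1.2)
  -- b ∈ B
  have hbB : b ∈ B := by
    rcases eq_or_lt_of_le hb0 with h | hbpos
    · rw [← h]; exact h0
    obtain ⟨l, hl⟩ := hηleft b hbpos
    have hev : {u : ℝ | dist (η u) l < 1} ∈ nhdsWithin b (Set.Iio b) :=
      hl (Metric.ball_mem_nhds l one_pos)
    obtain ⟨δ, hδ, hball⟩ := Metric.mem_nhdsWithin_iff.1 hev
    obtain ⟨b', hb'B, hb'⟩ := exists_lt_of_lt_csSup hne (show b - δ < b by linarith)
    have hb'le : b' ≤ b := le_csSup hbdd hb'B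
    obtain ⟨C', hC'⟩ := hb'B.2
    refine ⟨⟨hb0, hbt⟩, max C' (max (|l| + 1) (|η b|)), fun s hs => ?_⟩
    rcases le_or_gt s b' with h1 | h1
    · exact le_trans (hC' s ⟨hs.1, h1⟩) (le_max_left _ _)
    rcases eq_or_lt_of_le hs.2 with h2 | h2
    · rw [h2]
      exact (le_max_right _ _).trans (le_max_right _ _)
    · have hmem : s ∈ Metric.ball b δ ∩ Set.Iio b := by
        constructor
        · rw [Metric.mem_ball, Real.dist_eq, abs_of_nonpos (by linarith)]
          linarith
        · exact h2
      have := hball hmem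
      have : |η s| ≤ |l| + 1 := by
        have hd : dist (η s) l < 1 := this
        rw [Real.dist_eq] at hd
        calc |η s| = |η s - l + l| := by ring_nf
          _ ≤ |η s - l| + |l| := abs_add_le _ _
          _ ≤ |l| + 1 := by linarith
      exact this.trans ((le_max_left _ _).trans (le_max_right _ _))
  -- b = t
  have hbeq : b = t := by
    by_contra hne'
    have hblt : b < t := lt_of_le_of_ne hbt hne'
    have hcw := hηright b hb0
    have hev : {u : ℝ | dist (η u) (η b) < 1} ∈ nhdsWithin b (Set.Ici b) :=
      hcw (Metric.ball_mem_nhds (η b) one_pos)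
    obtain ⟨δ, hδ, hball⟩ := Metric.mem_nhdsWithin_iff.1 hev
    set c := min (b + δ / 2) t with hc
    have hcb : b < c := lt_min (by linarith) hblt
    have hcB : c ∈ B := by
      obtain ⟨Cb, hCb⟩ := hbB.2
      refine ⟨⟨hb0.trans hcb.le, min_le_right _ _⟩, max Cb (|η b| + 1), fun s hs => ?_⟩
      rcases le_or_gt s b with h1 | h1
      · exact (hCb s ⟨hs.1, h1⟩).trans (le_max_left _ _)
      · have hmem : s ∈ Metric.ball b δ ∩ Set.Ici b := by
          constructor
          · rw [Metric.mem_ball, Real.dist_eq, abs_of_nonneg (by linarith)]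
            have : s ≤ b + δ / 2 := hs.2.trans (min_le_left _ _)
            linarith
          · exact h1.le
        have hd := hball hmem
        rw [Set.mem_setOf_eq, Real.dist_eq] at hd
        have : |η s| ≤ |η b| + 1 := by
          calc |η s| = |η s - η b + η b| := by ring_nf
            _ ≤ |η s - η b| + |η b| := abs_add_le _ _
            _ ≤ |η b| + 1 := by linarith
        exact this.trans (le_max_right _ _)
    have := le_csSup hbdd hcB
    rw [← hbdef] at this
    linarith
  obtain ⟨C, hC⟩ := hbB.2
  exact ⟨C, fun s hs => hC s ⟨hs.1, hs.2.trans_eq hbeq.symm⟩⟩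

lemma aux_int (η : ℝ → ℝ)
    (hηright : ∀ s : ℝ, 0 ≤ s → ContinuousWithinAt η (Set.Ici s) s)
    (hηleft : ∀ s : ℝ, 0 < s → ∃ l : ℝ, Filter.Tendsto η (nhdsWithin s (Set.Iio s)) (nhds l))
    (β a b : ℝ) :
    IntervalIntegrable (fun s => Real.exp (β * η (max s 0))) MeasureTheory.volume a b := by
  obtain ⟨C, hC⟩ := aux_bdd η hηright hηleft (max |a| |b|)
  rw [intervalIntegrable_iff]
  refine MeasureTheory.Measure.integrableOn_of_bounded (M := Real.exp (|β| * C))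
    measure_Ioc_lt_top.ne
    ((Real.measurable_exp.comp ((aux_meas η hηright).const_mul β)).aestronglyMeasurable)
    ?_
  refine MeasureTheory.ae_restrict_of_forall_mem measurableSet_uIoc (fun s hs => ?_)
  have hs1 : max s 0 ∈ Set.Icc (0:ℝ) (max |a| |b|) := by
    constructor
    · exact le_max_right _ _
    · rcases Set.mem_uIoc.1 hs with h | h
      · refine max_le ?_ (le_max_iff.2 (Or.inl (abs_nonneg a))) 
        exact h.2.trans ((le_abs_self b).trans (le_max_right _ _))
      · refine max_le ?_ (le_max_iff.2 (Or.inl (abs_nonneg a)))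
        exact h.2.trans ((le_abs_self a).trans (le_max_left _ _))
  have hb := hC _ hs1
  have h1 : β * η (max s 0) ≤ |β| * C := by
    calc β * η (max s 0) ≤ |β * η (max s 0)| := le_abs_self _
      _ = |β| * |η (max s 0)| := abs_mul _ _
      _ ≤ |β| * C := mul_le_mul_of_nonneg_left hb (abs_nonneg β)
  rw [Real.norm_eq_abs, abs_of_pos (Real.exp_pos _)]
  exact Real.exp_le_exp.2 h1

/-- Deterministic core of Proposition 3: with `I_t(β) = ∫_0^t e^{βη_s} ds`,
`ζ(t) = inf{s : I_s(α) > t}`, `X_t = x e^{η_{ζ(t x^{-α})}}` and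
`A_t = ∫_0^t X_s⁻¹ ds`, one has `A_{x^α I_t(α)} = x^{α-1} I_t(α-1)` whenever
`x^α I_t(α) < x^α I_∞(α)` (the latter expressed via `∃ s, I_t(α) < I_s(α)`). -/
theorem stmt_15 (α : ℝ) (hα : 1 < α) (η : ℝ → ℝ) (hη0 : η 0 = 0)
    (hηright : ∀ s : ℝ, 0 ≤ s → ContinuousWithinAt η (Set.Ici s) s)
    (hηleft : ∀ s : ℝ, 0 < s → ∃ l : ℝ, Filter.Tendsto η (nhdsWithin s (Set.Iio s)) (nhds l))
    (x : ℝ) (hx : 0 < x)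
    (I : ℝ → ℝ → ℝ) (hI : ∀ t β, I t β = ∫ s in (0:ℝ)..t, Real.exp (β * η s))
    (ζ : ℝ → ℝ) (hζ : ∀ t, ζ t = sInf {s : ℝ | 0 ≤ s ∧ t < I s α})
    (X : ℝ → ℝ) (hX : ∀ t, X t = x * Real.exp (η (ζ (t / x ^ α))))
    (A : ℝ → ℝ) (hA : ∀ t, A t = ∫ s in (0:ℝ)..t, (X s)⁻¹) :
    ∀ t : ℝ, 0 ≤ t → (∃ s : ℝ, I t α < I s α) →
      A (x ^ α * I t α) = x ^ (α - 1) * I t (α - 1) := by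
  rintro t ht ⟨s₀, hs₀⟩
  set η' : ℝ → ℝ := fun s => η (max s 0) with hη'def
  have hη'meas : Measurable η' := aux_meas η hηright
  have hη'eq : ∀ s : ℝ, 0 ≤ s → η' s = η s := fun s hs => by
    simp only [hη'def, max_eq_left hs]
  set J : ℝ → ℝ → ℝ := fun β r => ∫ s in (0:ℝ)..r, Real.exp (β * η' s) with hJdef
  have hint : ∀ β a b : ℝ, IntervalIntegrable (fun s => Real.exp (β * η' s))
      MeasureTheory.volume a b := fun β a b => aux_int η hηright hηleft β a b
  have hJI : ∀ β r : ℝ, 0 ≤ r → J β r = I r β := by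
    intro β r hr
    rw [hI]
    refine intervalIntegral.integral_congr (fun s hs => ?_)
    rw [Set.uIcc_of_le hr] at hs
    rw [hη'eq s hs.1]
  have hJcont : ∀ β : ℝ, Continuous (J β) := fun β =>
    intervalIntegral.continuous_primitive (fun a b => hint β a b) 0
  have hJ0 : ∀ β : ℝ, J β 0 = 0 := fun β => intervalIntegral.integral_same
  have hJmono : ∀ β : ℝ, Monotone (J β) := by
    intro β a b hab
    have hadd := intervalIntegral.integral_add_adjacent_intervals (hint β 0 a) (hint β a b)
    have hnn : 0 ≤ ∫ s in a..b, Real.exp (β * η' s) :=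
      intervalIntegral.integral_nonneg hab (fun u _ => (Real.exp_pos _).le)
    simp only [hJdef]
    rw [← hadd]
    linarith
  have hJsm : ∀ β : ℝ, StrictMono (J β) := by
    intro β a b hab
    have hadd := intervalIntegral.integral_add_adjacent_intervals (hint β 0 a) (hint β a b)
    have hpos : 0 < ∫ s in a..b, Real.exp (β * η' s) :=
      intervalIntegral.intervalIntegral_pos_of_pos_on (hint β a b)
        (fun u _ => Real.exp_pos _) hab
    simp only [hJdef]
    rw [← hadd]
    linarith
  -- translate the hypothesis on s₀
  have hs₀0 : 0 ≤ s₀ := by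
    by_contra h
    push_neg at h
    have h1 : I s₀ α ≤ 0 := by
      rw [hI, intervalIntegral.integral_symm]
      have : 0 ≤ ∫ s in s₀..0, Real.exp (α * η s) :=
        intervalIntegral.integral_nonneg h.le (fun u _ => (Real.exp_pos _).le)
      linarith
    have h2 : 0 ≤ I t α := by
      rw [← hJI α t ht, ← hJ0 α]
      exact hJmono α ht
    linarith
  have hs₀J : J α t < J α s₀ := by rw [hJI α t ht, hJI α s₀ hs₀0]; exact hs₀
  -- the truncated inverse
  set S : ℝ → Set ℝ := fun u => {s : ℝ | 0 ≤ s ∧ min u (J α t) < J α s} with hSdef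
  set Z : ℝ → ℝ := fun u => sInf (S u) with hZdef
  have hSne : ∀ u, (S u).Nonempty := fun u =>
    ⟨s₀, hs₀0, lt_of_le_of_lt (min_le_right _ _) hs₀J⟩
  have hSbdd : ∀ u, BddBelow (S u) := fun u => ⟨0, fun s hs => hs.1⟩
  have hZnn : ∀ u, 0 ≤ Z u := fun u => le_csInf (hSne u) (fun s hs => hs.1)
  have hZle : ∀ u r : ℝ, 0 ≤ r → min u (J α t) < J α r → Z u ≤ r := fun u r h1 h2 =>
    csInf_le (hSbdd u) ⟨h1, h2⟩
  have hZge : ∀ u r : ℝ, J α r ≤ min u (J α t) → r ≤ Z u := by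
    intro u r h
    refine le_csInf (hSne u) (fun s hs => ?_)
    by_contra hc
    push_neg at hc
    exact absurd (lt_of_le_of_lt h hs.2) (not_lt.2 (hJmono α hc.le))
  have hZt : ∀ u, Z u ≤ t := by
    intro u
    refine le_of_forall_pos_le_add (fun ε hε => ?_)
    exact hZle u (t + ε) (by linarith) (lt_of_le_of_lt (min_le_right _ _)
      (hJsm α (by linarith)))
  have hZmono : Monotone Z := by
    intro u v huv
    refine csInf_le_csInf (hSbdd u) (hSne v) (fun s hs => ?_)
    exact ⟨hs.1, lt_of_le_of_lt (min_le_min huv le_rfl) hs.2⟩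
  have hZmeas : Measurable Z := hZmono.measurable
  have hZval : ∀ r : ℝ, 0 ≤ r → r ≤ t → Z (J α r) = r := by
    intro r hr hrt
    have hmin : min (J α r) (J α t) = J α r := min_eq_left (hJmono α hrt)
    refine le_antisymm ?_ (hZge _ r (le_of_eq hmin.symm))
    refine le_of_forall_pos_le_add (fun ε hε => ?_)
    exact hZle _ (r + ε) (by linarith) (by rw [hmin]; exact hJsm α (by linarith))
  -- the integrand g and its primitive G
  obtain ⟨C, hC⟩ := aux_bdd η hηright hηleft t
  set g : ℝ → ℝ := fun u => Real.exp (-(η' (Z u))) with hgdef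
  have hgmeas : Measurable g := Real.measurable_exp.comp ((hη'meas.comp hZmeas).neg)
  have hgbd : ∀ u, ‖g u‖ ≤ Real.exp C := by
    intro u
    have h1 : |η' (Z u)| ≤ C := by
      rw [hη'eq _ (hZnn u)]
      exact hC _ ⟨hZnn u, hZt u⟩
    rw [Real.norm_eq_abs, abs_of_pos (Real.exp_pos _)]
    refine Real.exp_le_exp.2 ?_
    have := neg_abs_le (η' (Z u))
    linarith
  have hgint : ∀ a b : ℝ, IntervalIntegrable g MeasureTheory.volume a b := by
    intro a b
    rw [intervalIntegrable_iff]
    exact MeasureTheory.Measure.integrableOn_of_bounded (M := Real.exp C)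
      measure_Ioc_lt_top.ne hgmeas.aestronglyMeasurable
      (Filter.Eventually.of_forall (fun u => hgbd u))
  set G : ℝ → ℝ := fun v => ∫ u in (0:ℝ)..v, g u with hGdef
  have hGcont : Continuous G := intervalIntegral.continuous_primitive hgint 0
  -- right-continuity of g at points J α r
  have hgcw : ∀ r : ℝ, 0 ≤ r → r ≤ t → ContinuousWithinAt g (Set.Ici (J α r)) (J α r) := by
    intro r hr hrt
    have hZcw : ContinuousWithinAt Z (Set.Ici (J α r)) (J α r) := by
      have hZv : Z (J α r) = r := hZval r hr hrt
      rw [ContinuousWithinAt, hZv]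
      rw [Metric.tendsto_nhds]
      intro ε hε
      have h1 : Set.Iio (J α (r + ε / 2)) ∈ nhdsWithin (J α r) (Set.Ici (J α r)) :=
        mem_nhdsWithin_of_mem_nhds (Iio_mem_nhds (hJsm α (by linarith)))
      filter_upwards [h1, self_mem_nhdsWithin] with u hu1 hu2
      have hlow : r ≤ Z u := hZge u r (le_min hu2 (hJmono α hrt))
      have hup : Z u ≤ r + ε / 2 :=
        hZle u (r + ε / 2) (by linarith) (lt_of_le_of_lt (min_le_left _ _) hu1)
      rw [Real.dist_eq, abs_of_nonneg (by linarith)]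
      linarith
    have hmaps : Set.MapsTo Z (Set.Ici (J α r)) (Set.Ici r) := fun u hu =>
      hZge u r (le_min hu (hJmono α hrt))
    have hcomp : ContinuousWithinAt (fun u => η' (Z u)) (Set.Ici (J α r)) (J α r) := by
      have h1 : ContinuousWithinAt η' (Set.Ici r) r := aux_cw η hηright r
      have hZv : Z (J α r) = r := hZval r hr hrt
      refine ContinuousWithinAt.comp (f := Z) (g := η') ?_ hZcw hmaps
      rw [hZv]; exact h1
    exact (Real.continuous_exp.continuousAt.comp_continuousWithinAt hcomp.neg)
  -- FTC right-derivatives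
  have hmeasAt : ∀ (f : ℝ → ℝ), Measurable f → ∀ p : ℝ,
      StronglyMeasurableAtFilter f (nhdsWithin p (Set.Ioi p)) MeasureTheory.volume :=
    fun f hf p => ⟨Set.univ, Filter.univ_mem, hf.aestronglyMeasurable.restrict⟩
  have hexpmeas : ∀ β : ℝ, Measurable (fun s => Real.exp (β * η' s)) := fun β =>
    Real.measurable_exp.comp (hη'meas.const_mul β)
  have hexpcw : ∀ β r : ℝ, ContinuousWithinAt (fun s => Real.exp (β * η' s))
      (Set.Ioi r) r := fun β r =>
    ((Real.continuous_exp.continuousAt.comp_continuousWithinAt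
      ((continuousWithinAt_const).mul (aux_cw η hηright r)))).mono Set.Ioi_subset_Ici_self
  have hJderiv : ∀ β r : ℝ, HasDerivWithinAt (J β) (Real.exp (β * η' r)) (Set.Ici r) r := by
    intro β r
    exact intervalIntegral.integral_hasDerivWithinAt_right (hint β 0 r)
      (hmeasAt _ (hexpmeas β) r) (hexpcw β r)
  have hGderiv : ∀ r : ℝ, 0 ≤ r → r ≤ t →
      HasDerivWithinAt G (g (J α r)) (Set.Ici (J α r)) (J α r) := by
    intro r hr hrt
    exact intervalIntegral.integral_hasDerivWithinAt_right (hgint 0 _)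
      (hmeasAt _ hgmeas _) ((hgcw r hr hrt).mono Set.Ioi_subset_Ici_self)
  -- the key identity via uniqueness of right-derivatives
  have key : ∀ y ∈ Set.Icc 0 t, G (J α y) = J (α - 1) y := by
    refine eq_of_has_deriv_right_eq (f' := fun r => Real.exp ((α - 1) * η' r))
      (fun r hrm => ?_) (fun r hrm => ?_)
      ((hGcont.comp (hJcont α)).continuousOn) ((hJcont (α - 1)).continuousOn) ?_
    · have hcomp := HasDerivWithinAt.comp (x := r)
        (hGderiv r hrm.1 (hrm.2.le)) (hJderiv α r)
        (fun u hu => hJmono α hu)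
      have hval : g (J α r) = Real.exp (-(η' r)) := by
        rw [hgdef]
        simp only
        rw [hZval r hrm.1 hrm.2.le]
      rw [hval] at hcomp
      have : Real.exp (-η' r) * Real.exp (α * η' r) = Real.exp ((α - 1) * η' r) := by
        rw [← Real.exp_add]; ring_nf
      rwa [this] at hcomp
    · exact hJderiv (α - 1) r
    · rw [hJ0 α, hJ0 (α - 1), hGdef]
      simp only
      exact intervalIntegral.integral_same
  have hkey : G (J α t) = J (α - 1) t := key t ⟨ht, le_rfl⟩
  -- final computation
  have hxα : (0:ℝ) < x ^ α := Real.rpow_pos_of_pos hx α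
  have hJt0 : 0 ≤ J α t := by rw [← hJ0 α]; exact hJmono α ht
  have hIJ : I t α = J α t := (hJI α t ht).symm
  rw [hA, hIJ]
  have hub : 0 ≤ x ^ α * J α t := mul_nonneg hxα.le hJt0
  have hcongr : ∫ s in (0:ℝ)..(x ^ α * J α t), (X s)⁻¹
      = ∫ s in (0:ℝ)..(x ^ α * J α t), x⁻¹ * g (s / x ^ α) := by
    refine intervalIntegral.integral_congr (fun s hs => ?_)
    rw [Set.uIcc_of_le hub] at hs
    have hu0 : 0 ≤ s / x ^ α := div_nonneg hs.1 hxα.le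
    have hu1 : s / x ^ α ≤ J α t := by
      rw [div_le_iff₀ hxα]
      calc s ≤ x ^ α * J α t := hs.2
        _ = J α t * x ^ α := mul_comm _ _
    have hζZ : ζ (s / x ^ α) = Z (s / x ^ α) := by
      rw [hζ, hZdef, hSdef]
      congr 1
      ext r
      simp only [Set.mem_setOf_eq, min_eq_left hu1]
      constructor
      · rintro ⟨h1, h2⟩; exact ⟨h1, by rwa [hJI α r h1]⟩
      · rintro ⟨h1, h2⟩; exact ⟨h1, by rwa [← hJI α r h1]⟩
    rw [hX, hζZ]
    rw [mul_inv, ← Real.exp_neg, ← hη'eq _ (hZnn _)]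
  rw [hcongr, intervalIntegral.integral_const_mul]
  have hcomp := intervalIntegral.integral_comp_div (a := (0:ℝ)) (b := x ^ α * J α t)
    (c := x ^ α) g (ne_of_gt hxα)
  rw [hcomp]
  rw [zero_div, mul_div_cancel_left₀ _ (ne_of_gt hxα)]
  rw [smul_eq_mul]
  have hGJ : ∫ u in (0:ℝ)..(J α t), g u = G (J α t) := rfl
  rw [hGJ, hkey, ← hJI (α - 1) t ht]
  have hxpow : x⁻¹ * x ^ α = x ^ (α - 1) := by
    rw [Real.rpow_sub hx, Real.rpow_one]
    field_simp
  calc x⁻¹ * (x ^ α * J (α - 1) t) = (x⁻¹ * x ^ α) * J (α - 1) t := by ring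
    _ = x ^ (α - 1) * J (α - 1) t := by rw [hxpow]
end

section
/- Let $\alpha > 1$, let $\eta: [0,\infty) \to \mathbb{R}$ be càdlàg with $\eta_0 = 0$, and define $I_t(\beta) = \int_0^t e^{\beta\eta_s} ds$, with right-continuous inverses $\zeta(t) = \inf\{s : I_s(\alpha) > t\}$ and $h(t) = \inf\{s : I_s(\alpha-1) > t\}$. For $x > 0$ define $X_t = x e^{\eta_{\zeta(t/x^{\alpha})}}$, $A_t = \int_0^t X_s^{-1} ds$, and let $\theta$ be the right-continuous inverse of $A$. Then for all $0 \leq t < x^{\alpha-1} I_{\infty}(\alpha-1)$, one has $\zeta(\theta(t)/x^{\alpha}) = h(t/x^{\alpha-1})$, and consequently $X_{\theta(t)} = x e^{\eta_{h(t/x^{\alpha-1})}}$. -/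
open Real MeasureTheory Set Filter Topology intervalIntegral

private lemma meas_of_rightCont (f : ℝ → ℝ)
    (hf : ∀ s : ℝ, ContinuousWithinAt f (Set.Ici s) s) : Measurable f := by
  have hmeas : ∀ n : ℕ, Measurable (fun s : ℝ => f ((⌈s * (n + 1)⌉ : ℝ) / (n + 1))) := by
    intro n
    have h1 : Measurable fun s : ℝ => (⌈s * (n + 1)⌉ : ℤ) :=
      Int.measurable_ceil.comp (measurable_id.mul_const _)
    exact (measurable_of_countable (fun k : ℤ => f ((k : ℝ) / (n + 1)))).comp h1
  apply measurable_of_tendsto_metrizable hmeas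
  rw [tendsto_pi_nhds]
  intro s
  have hpos : ∀ n : ℕ, (0:ℝ) < (n:ℝ) + 1 := fun n => by positivity
  have hge : ∀ n : ℕ, s ≤ (⌈s * (n + 1)⌉ : ℝ) / (n + 1) := by
    intro n
    rw [le_div_iff₀ (hpos n)]
    exact Int.le_ceil _
  have hlt : ∀ n : ℕ, (⌈s * (n + 1)⌉ : ℝ) / (n + 1) ≤ s + 1 / (n + 1) := by
    intro n
    rw [div_le_iff₀ (hpos n)]
    have := (Int.ceil_lt_add_one (s * ((n:ℝ) + 1))).le
    calc (⌈s * (n + 1)⌉ : ℝ) ≤ s * (n + 1) + 1 := this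
      _ = (s + 1 / (n + 1)) * (n + 1) := by field_simp
  have htend : Tendsto (fun n : ℕ => (⌈s * (n + 1)⌉ : ℝ) / (n + 1)) atTop (𝓝[Set.Ici s] s) := by
    apply tendsto_nhdsWithin_of_tendsto_nhds_of_eventually_within
    · have h0 : Tendsto (fun n : ℕ => s + 1 / ((n:ℝ) + 1)) atTop (𝓝 s) := by
        have := tendsto_one_div_add_atTop_nhds_zero_nat (𝕜 := ℝ)
        simpa using tendsto_const_nhds.add this
      exact tendsto_of_tendsto_of_tendsto_of_le_of_le tendsto_const_nhds h0 hge hlt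
    · exact Filter.Eventually.of_forall fun n => hge n
  exact (hf s).tendsto.comp htend

private lemma bdd_of_cadlag (f : ℝ → ℝ)
    (hr : ∀ s : ℝ, ContinuousWithinAt f (Set.Ici s) s)
    (hl : ∀ s : ℝ, ∃ l : ℝ, Tendsto f (𝓝[<] s) (𝓝 l)) (a b : ℝ) :
    ∃ M : ℝ, ∀ s ∈ Set.Icc a b, |f s| ≤ M := by
  have key : ∀ s : ℝ, ∃ M : ℝ, ∀ᶠ u in 𝓝 s, |f u| ≤ M := by
    intro s
    obtain ⟨l, hlt⟩ := hl s
    have h1 : ∀ᶠ u in 𝓝[<] s, |f u| ≤ |l| + 1 := by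
      have : ∀ᶠ y in 𝓝 l, |y| ≤ |l| + 1 := by
        have : {y : ℝ | |y| ≤ |l| + 1} ∈ 𝓝 l := by
          apply mem_of_superset (Metric.ball_mem_nhds l one_pos)
          intro y hy
          simp only [Metric.mem_ball, Real.dist_eq] at hy
          simp only [Set.mem_setOf_eq]
          calc |y| ≤ |y - l| + |l| := by simpa using abs_add_le (y - l) l
            _ ≤ |l| + 1 := by linarith [hy.le]
        exact this
      exact hlt.eventually this
    have h2 : ∀ᶠ u in 𝓝[≥] s, |f u| ≤ |f s| + 1 := by
      have : ∀ᶠ y in 𝓝 (f s), |y| ≤ |f s| + 1 := by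
        apply mem_of_superset (Metric.ball_mem_nhds (f s) one_pos)
        intro y hy
        simp only [Metric.mem_ball, Real.dist_eq] at hy
        simp only [Set.mem_setOf_eq]
        calc |y| ≤ |y - f s| + |f s| := by simpa using abs_add_le (y - f s) (f s)
          _ ≤ |f s| + 1 := by linarith [hy.le]
      exact (hr s).tendsto.eventually this
    refine ⟨max (|l| + 1) (|f s| + 1), ?_⟩
    rw [← nhdsLT_sup_nhdsGE s, eventually_sup]
    constructor
    · exact h1.mono fun u hu => le_trans hu (le_max_left _ _)
    · exact h2.mono fun u hu => le_trans hu (le_max_right _ _)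
  choose M hM using key
  have hK : IsCompact (Set.Icc a b) := isCompact_Icc
  obtain ⟨t, _, hcov⟩ := hK.elim_nhds_subcover (fun s => {u | |f u| ≤ M s}) fun s _ => hM s
  obtain ⟨B, hB⟩ := (t.image M).exists_le
  refine ⟨B, fun s hs => ?_⟩
  obtain ⟨i, hi, hsi⟩ := Set.mem_iUnion₂.1 (hcov hs)
  exact le_trans hsi (hB _ (Finset.mem_image_of_mem M hi))

/-- Pathwise statement of Proposition 3: with `I_t(β) = ∫_0^t e^{βη_s} ds`,
`ζ(t) = inf{s : I_s(α) > t}`, `h(t) = inf{s : I_s(α-1) > t}`,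
`X_t = x e^{η_{ζ(t/x^α)}}`, `A_t = ∫_0^t X_s⁻¹ ds` and `θ` the right-continuous
inverse of `A`, one has `ζ(θ(t)/x^α) = h(t/x^{α-1})` and hence
`X_{θ(t)} = x e^{η_{h(t/x^{α-1})}}` for all `0 ≤ t < x^{α-1} I_∞(α-1)`
(the latter expressed via `∃ s, t < x^{α-1} I_s(α-1)`). -/
theorem stmt_16 (α : ℝ) (hα : 1 < α) (η : ℝ → ℝ) (hη0 : η 0 = 0)
    (hηright : ∀ s : ℝ, 0 ≤ s → ContinuousWithinAt η (Set.Ici s) s)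
    (hηleft : ∀ s : ℝ, 0 < s → ∃ l : ℝ, Filter.Tendsto η (nhdsWithin s (Set.Iio s)) (nhds l))
    (x : ℝ) (hx : 0 < x)
    (I : ℝ → ℝ → ℝ) (hI : ∀ t β, I t β = ∫ s in (0:ℝ)..t, Real.exp (β * η s))
    (ζ h : ℝ → ℝ)
    (hζ : ∀ t, ζ t = sInf {s : ℝ | 0 ≤ s ∧ t < I s α})
    (hh : ∀ t, h t = sInf {s : ℝ | 0 ≤ s ∧ t < I s (α - 1)})
    (X : ℝ → ℝ) (hX : ∀ t, X t = x * Real.exp (η (ζ (t / x ^ α))))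
    (A : ℝ → ℝ) (hA : ∀ t, A t = ∫ s in (0:ℝ)..t, (X s)⁻¹)
    (θ : ℝ → ℝ) (hθ : ∀ t, θ t = sInf {s : ℝ | 0 ≤ s ∧ t < A s}) :
    ∀ t : ℝ, 0 ≤ t → (∃ s : ℝ, t < x ^ (α - 1) * I s (α - 1)) →
      ζ (θ t / x ^ α) = h (t / x ^ (α - 1)) ∧
      X (θ t) = x * Real.exp (η (h (t / x ^ (α - 1)))) := by
  -- the modified (everywhere càdlàg) driver
  set η' : ℝ → ℝ := fun s => η (max s 0) with hη'def
  have hη'eq : ∀ s : ℝ, 0 ≤ s → η' s = η s := fun s hs => by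
    simp [hη'def, max_eq_left hs]
  have hη'r : ∀ s : ℝ, ContinuousWithinAt η' (Set.Ici s) s := by
    intro s
    rcases le_or_gt 0 s with hs | hs
    · have : ContinuousWithinAt η (Set.Ici s) s := hηright s hs
      apply this.congr
      · intro u hu; exact hη'eq u (le_trans hs hu)
      · exact hη'eq s hs
    · have hev : ∀ᶠ u in 𝓝 s, η' u = η 0 := by
        filter_upwards [Iio_mem_nhds hs] with u hu
        simp [hη'def, max_eq_right (le_of_lt (Set.mem_Iio.1 hu))]
      have : ContinuousAt η' s := by
        have hconst : ContinuousAt (fun _ : ℝ => η 0) s := continuousAt_const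
        exact hconst.congr (hev.mono fun u hu => hu.symm)
      exact this.continuousWithinAt
  have hη'l : ∀ s : ℝ, ∃ l : ℝ, Tendsto η' (𝓝[<] s) (𝓝 l) := by
    intro s
    rcases lt_or_ge 0 s with hs | hs
    · obtain ⟨l, hl⟩ := hηleft s hs
      refine ⟨l, hl.congr' ?_⟩
      filter_upwards [Ioo_mem_nhdsLT_of_mem (Set.mem_Ioc.2 ⟨hs, le_rfl⟩)] with u hu
      exact (hη'eq u hu.1.le).symm
    · refine ⟨η 0, tendsto_const_nhds.congr' ?_⟩
      filter_upwards [self_mem_nhdsWithin] with u hu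
      have : u < 0 := lt_of_lt_of_le hu hs
      simp [hη'def, max_eq_right this.le]
  have hη'meas : Measurable η' := meas_of_rightCont η' hη'r
  -- the exponential integrands
  set f : ℝ → ℝ → ℝ := fun β s => Real.exp (β * η' s) with hfdef
  have hfmeas : ∀ β, Measurable (f β) := fun β => ((hη'meas.const_mul β).exp)
  have hfpos : ∀ β s, 0 < f β s := fun β s => Real.exp_pos _
  have hfint : ∀ β a b, IntervalIntegrable (f β) volume a b := by
    intro β a b
    obtain ⟨M, hM⟩ := bdd_of_cadlag η' hη'r hη'l (min a b) (max a b)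
    rw [intervalIntegrable_iff]
    apply Measure.integrableOn_of_bounded (measure_Ioc_lt_top).ne
      (hfmeas β).aestronglyMeasurable
    · filter_upwards [ae_restrict_mem measurableSet_Ioc] with s hs
      have hs' : s ∈ Set.Icc (min a b) (max a b) := ⟨hs.1.le, hs.2⟩
      have : |η' s| ≤ M := hM s hs'
      have h1 : β * η' s ≤ |β| * M := by
        calc β * η' s ≤ |β * η' s| := le_abs_self _
          _ = |β| * |η' s| := abs_mul _ _
          _ ≤ |β| * M := by
            apply mul_le_mul_of_nonneg_left this (abs_nonneg β)
      rw [hfdef]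
      simp only [Real.norm_eq_abs, Real.abs_exp]
      exact Real.exp_le_exp.2 h1
  -- the primitives J β
  set J : ℝ → ℝ → ℝ := fun β u => ∫ s in (0:ℝ)..u, f β s with hJdef
  have hJcont : ∀ β, Continuous (J β) := fun β =>
    intervalIntegral.continuous_primitive (fun a b => hfint β a b) 0
  have hJmono : ∀ β, StrictMono (J β) := by
    intro β a b hab
    have h1 : J β b = J β a + ∫ s in a..b, f β s := by
      rw [hJdef]
      exact (integral_add_adjacent_intervals (hfint β 0 a) (hfint β a b)).symm
    have h2 : 0 < ∫ s in a..b, f β s :=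
      intervalIntegral_pos_of_pos (hfint β a b) (hfpos β) hab
    linarith
  have hJ0 : ∀ β, J β 0 = 0 := fun β => integral_same
  have hIJ : ∀ β s, 0 ≤ s → I s β = J β s := by
    intro β s hs
    rw [hI, hJdef]
    apply intervalIntegral.integral_congr
    intro u hu
    rw [Set.uIcc_of_le hs] at hu
    show Real.exp (β * η u) = Real.exp (β * η' u)
    rw [hη'eq u hu.1]
  -- generic inverse lemma for the primitives
  have hinv : ∀ β t b, 0 ≤ t → 0 ≤ b → t < J β b →
      ∃ u, 0 ≤ u ∧ u ≤ b ∧ J β u = t ∧ sInf {s : ℝ | 0 ≤ s ∧ t < J β s} = u := by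
    intro β t b ht hb htb
    have hIVT : t ∈ Set.Icc (J β 0) (J β b) := by
      rw [hJ0]; exact ⟨ht, htb.le⟩
    obtain ⟨u, hu, hJu⟩ := intermediate_value_Icc hb ((hJcont β).continuousOn) hIVT
    have hset : {s : ℝ | 0 ≤ s ∧ t < J β s} = Set.Ioi u := by
      ext s
      simp only [Set.mem_setOf_eq, Set.mem_Ioi]
      constructor
      · rintro ⟨hs0, hst⟩
        rw [← hJu] at hst
        exact (hJmono β).lt_iff_lt.1 hst
      · intro hus
        refine ⟨le_trans hu.1 hus.le, ?_⟩
        rw [← hJu]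
        exact (hJmono β) hus
    exact ⟨u, hu.1, hu.2, hJu, by rw [hset]; exact csInf_Ioi⟩
  -- ζ in terms of J
  have hζ' : ∀ v, ζ v = sInf {s : ℝ | 0 ≤ s ∧ v < J α s} := by
    intro v
    rw [hζ]
    congr 1
    ext s
    simp only [Set.mem_setOf_eq, and_congr_right_iff]
    intro hs
    rw [hIJ α s hs]
  have hζnn : ∀ v, 0 ≤ ζ v := by
    intro v
    rw [hζ']
    exact Real.sInf_nonneg (fun s hs => hs.1)
  intro t ht hex
  obtain ⟨s₀, hs₀⟩ := hex
  have hxα : 0 < x ^ α := Real.rpow_pos_of_pos hx α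
  have hxα1 : 0 < x ^ (α - 1) := Real.rpow_pos_of_pos hx _
  have hs₀pos : 0 < s₀ := by
    by_contra hcon
    push_neg at hcon
    have h1 : I s₀ (α - 1) ≤ 0 := by
      rw [hI]
      have h2 : 0 ≤ ∫ s in s₀..(0:ℝ), Real.exp ((α - 1) * η s) :=
        intervalIntegral.integral_nonneg hcon (fun u _ => (Real.exp_pos _).le)
      rw [intervalIntegral.integral_symm]
      linarith
    have h3 := mul_le_mul_of_nonneg_left h1 hxα1.le
    rw [mul_zero] at h3
    linarith
  set t' := t / x ^ (α - 1) with ht'def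
  have ht'0 : 0 ≤ t' := div_nonneg ht hxα1.le
  have ht's₀ : t' < J (α - 1) s₀ := by
    rw [← hIJ _ _ hs₀pos.le, ht'def, div_lt_iff₀ hxα1, mul_comm]
    exact hs₀
  obtain ⟨w, hw0, hws₀, hJw, hsInfw⟩ := hinv (α - 1) t' s₀ ht'0 hs₀pos.le ht's₀
  have hhw : h t' = w := by
    rw [hh]
    have hsets : {s : ℝ | 0 ≤ s ∧ t' < I s (α - 1)} = {s : ℝ | 0 ≤ s ∧ t' < J (α - 1) s} := by
      ext s
      simp only [Set.mem_setOf_eq, and_congr_right_iff]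
      intro hs
      rw [hIJ _ s hs]
    rw [hsets, hsInfw]
  have hwlt : w < s₀ := (hJmono _).lt_iff_lt.1 (by rw [hJw]; exact ht's₀)
  -- specification of ζ on [0, J α s₀]
  have hζspec : ∀ v, 0 ≤ v → v ≤ J α s₀ → J α (ζ v) = v ∧ ζ v ≤ s₀ := by
    intro v hv0 hvM
    obtain ⟨u, hu0, _, hJu, hsInfu⟩ := hinv α v (s₀ + 1) hv0 (by linarith)
      (lt_of_le_of_lt hvM (hJmono α (lt_add_one s₀)))
    have : ζ v = u := by rw [hζ', hsInfu]
    rw [this, hJu]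
    exact ⟨rfl, ((hJmono α).le_iff_le).1 (by rw [hJu]; exact hvM)⟩
  have hζJ : ∀ u, 0 ≤ u → u ≤ s₀ → ζ (J α u) = u := by
    intro u hu0 hus₀
    have hv0 : 0 ≤ J α u := by
      have := (hJmono α).monotone hu0
      rwa [hJ0] at this
    have hvM : J α u ≤ J α s₀ := (hJmono α).monotone hus₀
    exact (hJmono α).injective (hζspec _ hv0 hvM).1
  have hζneg : ∀ v, v < 0 → ζ v = 0 := by
    intro v hv
    rw [hζ']
    have : {s : ℝ | 0 ≤ s ∧ v < J α s} = Set.Ici 0 := by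
      ext s
      simp only [Set.mem_setOf_eq, Set.mem_Ici, and_iff_left_iff_imp]
      intro hs
      have : (0:ℝ) ≤ J α s := by
        have := (hJmono α).monotone hs
        rwa [hJ0] at this
      linarith
    rw [this, csInf_Ici]
  -- the monotone time change ψ and the modified integrand ĝ
  set M₀ := J α s₀ with hM₀def
  have hM₀pos : 0 < M₀ := by
    have := hJmono α hs₀pos
    rwa [hJ0] at this
  set ψ : ℝ → ℝ := fun s => ζ (min (s / x ^ α) M₀) with hψdef
  have hψ0 : ∀ s, 0 ≤ ψ s := fun s => hζnn _
  have hψs₀ : ∀ s, ψ s ≤ s₀ := by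
    intro s
    rcases lt_or_ge (min (s / x ^ α) M₀) 0 with hm | hm
    · show ζ (min (s / x ^ α) M₀) ≤ s₀
      rw [hζneg _ hm]
      exact hs₀pos.le
    · exact (hζspec _ hm (min_le_right _ _)).2
  have hψmono : Monotone ψ := by
    intro a b hab
    show ζ (min (a / x ^ α) M₀) ≤ ζ (min (b / x ^ α) M₀)
    have hvab : min (a / x ^ α) M₀ ≤ min (b / x ^ α) M₀ :=
      min_le_min ((div_le_div_iff_of_pos_right hxα).2 hab) le_rfl
    rcases lt_or_ge (min (b / x ^ α) M₀) 0 with hb | hb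
    · rw [hζneg _ (lt_of_le_of_lt hvab hb), hζneg _ hb]
    · rcases lt_or_ge (min (a / x ^ α) M₀) 0 with ha | ha
      · rw [hζneg _ ha]; exact hζnn _
      · have h1 := (hζspec _ ha (min_le_right _ _)).1
        have h2 := (hζspec _ hb (min_le_right _ _)).1
        exact ((hJmono α).le_iff_le).1 (by rw [h1, h2]; exact hvab)
  have hψmeas : Measurable ψ := hψmono.measurable
  set g' : ℝ → ℝ := fun s => (x * Real.exp (η' (ψ s)))⁻¹ with hg'def
  have hg'pos : ∀ s, 0 < g' s := fun s => by positivity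
  obtain ⟨Mη, hMη⟩ := bdd_of_cadlag η' hη'r hη'l 0 s₀
  have hg'bdd : ∀ s, g' s ≤ x⁻¹ * Real.exp Mη := by
    intro s
    have h1 : |η' (ψ s)| ≤ Mη := hMη _ ⟨hψ0 s, hψs₀ s⟩
    show (x * Real.exp (η' (ψ s)))⁻¹ ≤ x⁻¹ * Real.exp Mη
    rw [mul_inv, ← Real.exp_neg]
    apply mul_le_mul_of_nonneg_left _ (inv_nonneg.2 hx.le)
    exact Real.exp_le_exp.2 (by cases abs_le.1 h1; linarith)
  have hg'meas : Measurable g' := by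
    apply Measurable.inv
    exact measurable_const.mul ((hη'meas.comp hψmeas).exp)
  have hg'int : ∀ a b, IntervalIntegrable g' volume a b := by
    intro a b
    rw [intervalIntegrable_iff]
    apply Measure.integrableOn_of_bounded (measure_Ioc_lt_top).ne hg'meas.aestronglyMeasurable
    filter_upwards with s
    rw [Real.norm_eq_abs, abs_of_pos (hg'pos s)]
    exact hg'bdd s
  set Ah : ℝ → ℝ := fun r => ∫ s in (0:ℝ)..r, g' s with hAhdef
  have hAhcont : Continuous Ah := intervalIntegral.continuous_primitive hg'int 0
  have hAhmono : StrictMono Ah := by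
    intro a b hab
    have h1 : Ah b = Ah a + ∫ s in a..b, g' s :=
      (integral_add_adjacent_intervals (hg'int 0 a) (hg'int a b)).symm
    have h2 : 0 < ∫ s in a..b, g' s := intervalIntegral_pos_of_pos (hg'int a b) hg'pos hab
    linarith
  -- A agrees with Ah on [0, x^α * M₀]
  have hXg : ∀ s ∈ Set.Icc 0 (x ^ α * M₀), (X s)⁻¹ = g' s := by
    intro s hs
    have hs1 : 0 ≤ s / x ^ α := div_nonneg hs.1 hxα.le
    have hs2 : s / x ^ α ≤ M₀ := by
      rw [div_le_iff₀ hxα, mul_comm]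
      exact hs.2
    have hmin : min (s / x ^ α) M₀ = s / x ^ α := min_eq_left hs2
    have hψs : ψ s = ζ (s / x ^ α) := by
      show ζ (min (s / x ^ α) M₀) = ζ (s / x ^ α)
      rw [hmin]
    rw [hX, hg'def]
    simp only [hψs]
    rw [hη'eq _ (hζnn _)]
  have hAeq : ∀ r ∈ Set.Icc 0 (x ^ α * M₀), A r = Ah r := by
    intro r hr
    rw [hA, hAhdef]
    apply intervalIntegral.integral_congr
    intro s hs
    rw [Set.uIcc_of_le hr.1] at hs
    exact hXg s ⟨hs.1, le_trans hs.2 hr.2⟩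
  -- FTC: right derivative of the primitives J
  have hJderiv : ∀ β u, HasDerivWithinAt (J β) (f β u) (Set.Ici u) u := by
    intro β u
    apply intervalIntegral.integral_hasDerivWithinAt_right (hfint β 0 u)
      (s := Set.Ici u) (t := Set.Ioi u)
      (hfmeas β).stronglyMeasurable.stronglyMeasurableAtFilter
    exact (Real.continuous_exp.continuousAt.comp_continuousWithinAt
      (continuousWithinAt_const.mul (hη'r u))).mono Set.Ioi_subset_Ici_self
  -- time change c and target G
  set c : ℝ → ℝ := fun v => x ^ α * J α v with hcdef
  have hcmono : StrictMono c := fun a b hab =>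
    mul_lt_mul_of_pos_left (hJmono α hab) hxα
  have hccont : Continuous c := continuous_const.mul (hJcont α)
  have hc0 : c 0 = 0 := by show x ^ α * J α 0 = 0; rw [hJ0, mul_zero]
  have hcdiv : ∀ v, c v / x ^ α = J α v := fun v => by
    show x ^ α * J α v / x ^ α = J α v
    field_simp
  have hψc : ∀ u, 0 ≤ u → u ≤ s₀ → ψ (c u) = u := by
    intro u hu0 hus₀
    show ζ (min (c u / x ^ α) M₀) = u
    rw [hcdiv, min_eq_left ((hJmono α).monotone hus₀)]
    exact hζJ u hu0 hus₀
  -- right-continuity of ψ along the time change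
  have hψtend : ∀ u, 0 ≤ u → u < s₀ →
      Tendsto ψ (𝓝[Set.Ici (c u)] (c u)) (𝓝[Set.Ici u] u) := by
    intro u hu0 hus₀
    have hψcu : ψ (c u) = u := hψc u hu0 hus₀.le
    have hmem : ∀ᶠ s in 𝓝[Set.Ici (c u)] (c u), ψ s ∈ Set.Ici u := by
      filter_upwards [eventually_mem_nhdsWithin] with s hs
      rw [← hψcu]
      exact hψmono hs
    rw [tendsto_nhdsWithin_iff]
    refine ⟨tendsto_order.2 ⟨?_, ?_⟩, hmem⟩
    · intro b hb
      filter_upwards [hmem] with s hs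
      exact lt_of_lt_of_le hb hs
    · intro b hb
      rcases le_or_gt b s₀ with hbs₀ | hbs₀
      · have hJub : c u < x ^ α * J α b := mul_lt_mul_of_pos_left (hJmono α hb) hxα
        have hmem2 : Set.Iio (x ^ α * J α b) ∈ 𝓝[Set.Ici (c u)] (c u) :=
          nhdsWithin_le_nhds (Iio_mem_nhds hJub)
        filter_upwards [hmem2, eventually_mem_nhdsWithin] with s hs1 hs2
        have hcu0 : 0 ≤ c u := by
          rw [← hc0]
          exact hcmono.monotone hu0
        have h1 : 0 ≤ s / x ^ α := div_nonneg (le_trans hcu0 hs2) hxα.le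
        have h2 : s / x ^ α < J α b := by
          rw [div_lt_iff₀ hxα, mul_comm]
          exact hs1
        have h3 : s / x ^ α ≤ M₀ := le_trans h2.le ((hJmono α).monotone hbs₀)
        have hspec := (hζspec _ h1 h3).1
        have hψs : ψ s = ζ (s / x ^ α) := by
          show ζ (min (s / x ^ α) M₀) = ζ (s / x ^ α)
          rw [min_eq_left h3]
        rw [hψs]
        by_contra hcon
        push_neg at hcon
        have := (hJmono α).monotone hcon
        rw [hspec] at this
        linarith
      · filter_upwards with s
        exact lt_of_le_of_lt (hψs₀ s) hbs₀
  -- right derivative of Ah ∘ c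
  have hFderiv : ∀ u ∈ Set.Ico 0 s₀, HasDerivWithinAt (fun v => Ah (c v))
      (x ^ (α - 1) * Real.exp ((α - 1) * η' u)) (Set.Ici u) u := by
    rintro u ⟨hu0, hus₀⟩
    have hψcu : ψ (c u) = u := hψc u hu0 hus₀.le
    have hval : g' (c u) = (x * Real.exp (η' u))⁻¹ := by
      show (x * Real.exp (η' (ψ (c u))))⁻¹ = _
      rw [hψcu]
    have hgcont : ContinuousWithinAt g' (Set.Ici (c u)) (c u) := by
      have houter : ContinuousAt (fun y : ℝ => (x * Real.exp y)⁻¹) (η' u) :=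
        (continuousAt_const.mul Real.continuous_exp.continuousAt).inv₀ (mul_pos hx (Real.exp_pos _)).ne'
      have hmid : Tendsto (fun s => η' (ψ s)) (𝓝[Set.Ici (c u)] (c u)) (𝓝 (η' u)) :=
        (hη'r u).tendsto.comp (hψtend u hu0 hus₀)
      have htot : Tendsto g' (𝓝[Set.Ici (c u)] (c u)) (𝓝 ((x * Real.exp (η' u))⁻¹)) :=
        houter.tendsto.comp hmid
      show Tendsto g' (𝓝[Set.Ici (c u)] (c u)) (𝓝 (g' (c u)))
      rw [hval]
      exact htot
    have hAh' : HasDerivWithinAt Ah (g' (c u)) (Set.Ici (c u)) (c u) :=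
      intervalIntegral.integral_hasDerivWithinAt_right (hg'int 0 (c u))
        (s := Set.Ici (c u)) (t := Set.Ioi (c u))
        hg'meas.stronglyMeasurable.stronglyMeasurableAtFilter
        (hgcont.mono Set.Ioi_subset_Ici_self)
    have hc' : HasDerivWithinAt c (x ^ α * f α u) (Set.Ici u) u := by
      show HasDerivWithinAt (fun v => x ^ α * J α v) (x ^ α * f α u) (Set.Ici u) u
      exact (hJderiv α u).const_mul (x ^ α)
    have hcomp : HasDerivWithinAt (fun v => Ah (c v)) (g' (c u) * (x ^ α * f α u))
        (Set.Ici u) u := hAh'.comp u hc' (fun v hv => hcmono.monotone hv)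
    have hvalue : g' (c u) * (x ^ α * f α u)
        = x ^ (α - 1) * Real.exp ((α - 1) * η' u) := by
      rw [hval]
      have hxsplit : x ^ α = x ^ (α - 1) * x := by
        rw [← Real.rpow_add_one hx.ne' (α - 1), sub_add_cancel]
      have hesplit : Real.exp (α * η' u)
          = Real.exp ((α - 1) * η' u) * Real.exp (η' u) := by
        rw [← Real.exp_add]
        ring_nf
      show (x * Real.exp (η' u))⁻¹ * (x ^ α * Real.exp (α * η' u)) = _
      rw [hxsplit, hesplit]
      have he : Real.exp (η' u) ≠ 0 := (Real.exp_pos _).ne'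
      field_simp
    rw [← hvalue]
    exact hcomp
  have hGderiv : ∀ u ∈ Set.Ico 0 s₀, HasDerivWithinAt (fun v => x ^ (α - 1) * J (α - 1) v)
      (x ^ (α - 1) * Real.exp ((α - 1) * η' u)) (Set.Ici u) u := by
    rintro u ⟨hu0, hus₀⟩
    exact (hJderiv (α - 1) u).const_mul (x ^ (α - 1))
  have hkey : ∀ y ∈ Set.Icc 0 s₀, Ah (c y) = x ^ (α - 1) * J (α - 1) y := by
    apply eq_of_has_deriv_right_eq hFderiv hGderiv
    · exact (hAhcont.comp hccont).continuousOn
    · exact (continuous_const.mul (hJcont (α - 1))).continuousOn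
    · rw [hc0, hJ0, mul_zero]
      show Ah 0 = 0
      exact integral_same
  have hAhcw : Ah (c w) = t := by
    rw [hkey w ⟨hw0, hws₀⟩, hJw, ht'def]
    field_simp
  have hu'0 : 0 ≤ c w := by
    rw [← hc0]
    exact hcmono.monotone hw0
  have hu'lt : c w < x ^ α * M₀ := hcmono hwlt
  have hθt : θ t = c w := by
    rw [hθ]
    have hsub : {s : ℝ | 0 ≤ s ∧ t < A s} ⊆ Set.Ioi (c w) := by
      intro s hs
      by_contra hcon
      have hcon' : s ≤ c w := not_lt.1 (fun hlt => hcon hlt)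
      have hA1 : A s = Ah s := hAeq s ⟨hs.1, le_trans hcon' hu'lt.le⟩
      have hA2 : Ah s ≤ Ah (c w) := hAhmono.monotone hcon'
      have := hs.2
      rw [hA1] at this
      linarith [hAhcw ▸ hA2]
    have hsup : Set.Ioc (c w) (x ^ α * M₀) ⊆ {s : ℝ | 0 ≤ s ∧ t < A s} := by
      intro s hs
      have hs0 : 0 ≤ s := le_trans hu'0 hs.1.le
      refine ⟨hs0, ?_⟩
      rw [hAeq s ⟨hs0, hs.2⟩, ← hAhcw]
      exact hAhmono hs.1
    apply le_antisymm
    · calc sInf {s : ℝ | 0 ≤ s ∧ t < A s} ≤ sInf (Set.Ioc (c w) (x ^ α * M₀)) :=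
        csInf_le_csInf ⟨c w, fun s hs => (hsub hs).le⟩ (Set.nonempty_Ioc.2 hu'lt) hsup
      _ = c w := csInf_Ioc hu'lt
    · exact le_csInf ⟨x ^ α * M₀, hsup ⟨hu'lt, le_rfl⟩⟩ fun s hs => (hsub hs).le
  have hζθ : ζ (θ t / x ^ α) = w := by
    rw [hθt, hcdiv]
    exact hζJ w hw0 hws₀
  refine ⟨?_, ?_⟩
  · rw [hζθ, hhw]
  · rw [hX, hζθ, hhw]
end
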